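/- Let H be a d×d real symmetric positive definite matrix, x ∈ ℝᵈ, and define f(z) = ½(z − x)ᵀH(z − x). Let Θ : ℝᵈ → ℝ be twice continuously differentiable and let Θᵐᵃˣ ∈ ℝ. Suppose x⋆ ∈ ℝᵈ and μ⋆ ≥ 0 satisfy: (i) stationarity H(x⋆ − x) = μ⋆·∇Θ(x⋆); (ii) feasibility Θ(x⋆) = Θᵐᵃˣ; (iii) the Hessian of Θ at x⋆ factors as ∇²Θ(x⋆) = Q K Qᵀ for a d×r real matrix Q and an r×r real symmetric matrix K; and (iv) the spectral inequality μ⋆·ρ(K Qᵀ H⁻¹ Q) < 1. Then x⋆ is a strict local minimizer of f on the set {z ∈ ℝᵈ : Θ(z) = Θᵐᵃˣ}. -/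

import Mathlib

set_option maxHeartbeats 1000000

open Matrix

/-- Spectral radius of a real square matrix: the maximum modulus of its eigenvalues
viewed as a complex matrix (`0` if there are none). -/
noncomputable def specRad {n : Type*} [Fintype n] [DecidableEq n]
    (A : Matrix n n ℝ) : ℝ :=
  sSup ((fun z : ℂ => ‖z‖) '' spectrum ℂ (A.map (algebraMap ℝ ℂ)))

open scoped MatrixOrder

section Helpers

lemma ct_real {m n : Type*} (A : Matrix m n ℝ) : Aᴴ = Aᵀ := by
  ext i j; simp [conjTranspose_apply]

lemma quad_repr {d : ℕ} {S : Matrix (Fin d) (Fin d) ℝ} (hS : S.IsHermitian) (v : Fin d → ℝ) :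
    ∃ c : Fin d → ℝ, v ⬝ᵥ S *ᵥ v = ∑ i, hS.eigenvalues i * (c i)^2 ∧ v ⬝ᵥ v = ∑ i, (c i)^2 := by
  classical
  set U : Matrix (Fin d) (Fin d) ℝ := (hS.eigenvectorUnitary : Matrix (Fin d) (Fin d) ℝ) with hU
  have hUmem : U ∈ unitaryGroup (Fin d) ℝ := hS.eigenvectorUnitary.2
  have hUUt : U * Uᵀ = 1 := by
    have := (mem_unitaryGroup_iff).mp hUmem
    rwa [star_eq_conjTranspose, ct_real] at this
  have hdiag : (RCLike.ofReal ∘ hS.eigenvalues : Fin d → ℝ) = hS.eigenvalues := by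
    ext i; simp
  have hspec : S = U * diagonal hS.eigenvalues * Uᵀ := by
    conv_lhs => rw [hS.spectral_theorem]
    rw [Unitary.conjStarAlgAut_apply, star_eq_conjTranspose, ct_real, hdiag]
  set c : Fin d → ℝ := Uᵀ *ᵥ v with hc
  have hdot : ∀ w : Fin d → ℝ, c ⬝ᵥ Uᵀ *ᵥ w = (U *ᵥ c) ⬝ᵥ w := by
    intro w
    rw [dotProduct_mulVec, vecMul_transpose]
  refine ⟨c, ?_, ?_⟩
  · conv_lhs => rw [hspec]
    have h1 : (U * diagonal hS.eigenvalues * Uᵀ) *ᵥ v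
        = U *ᵥ (diagonal hS.eigenvalues *ᵥ c) := by
      rw [hc, mulVec_mulVec, mulVec_mulVec]
    rw [h1, dotProduct_mulVec v U]
    have h2 : v ᵥ* U = c := by rw [hc, ← vecMul_transpose, transpose_transpose]
    rw [h2]
    simp [mulVec_diagonal, dotProduct, pow_two, mul_comm, mul_assoc, mul_left_comm]
  · have h3 : c ⬝ᵥ c = v ⬝ᵥ v := by
      calc c ⬝ᵥ c = (U *ᵥ c) ⬝ᵥ v := hdot v
        _ = ((U * Uᵀ) *ᵥ v) ⬝ᵥ v := by rw [hc, mulVec_mulVec]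
        _ = v ⬝ᵥ v := by rw [hUUt, one_mulVec]
    rw [← h3]
    simp [dotProduct, pow_two]

lemma mem_spectrum_map {n : Type*} [Fintype n] [DecidableEq n] {A : Matrix n n ℝ} {t : ℝ}
    (ht : t ∈ spectrum ℝ A) : (t : ℂ) ∈ spectrum ℂ (A.map (algebraMap ℝ ℂ)) := by
  rw [spectrum.mem_iff] at ht ⊢
  intro hu
  apply ht
  rw [Matrix.isUnit_iff_isUnit_det] at hu ⊢
  have hmap : algebraMap ℂ (Matrix n n ℂ) (t : ℂ) - A.map (algebraMap ℝ ℂ)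
      = (algebraMap ℝ (Matrix n n ℝ) t - A).map (algebraMap ℝ ℂ) := by
    ext i j
    simp [Matrix.algebraMap_matrix_apply, Matrix.map_apply, apply_ite]
  rw [hmap, ← RingHom.mapMatrix_apply, ← RingHom.map_det] at hu
  rw [isUnit_iff_ne_zero] at hu ⊢
  simpa using hu

lemma specRad_nonneg {n : Type*} [Fintype n] [DecidableEq n] (A : Matrix n n ℝ) :
    0 ≤ specRad A :=
  Real.sSup_nonneg (by rintro x ⟨z, _, rfl⟩; exact norm_nonneg z)

lemma algmap_mulVec {n : ℕ} (t : ℂ) (v : Fin n → ℂ) :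
    (algebraMap ℂ (Matrix (Fin n) (Fin n) ℂ)) t *ᵥ v = t • v := by
  rw [Algebra.algebraMap_eq_smul_one, smul_mulVec, one_mulVec]

lemma spec_swap {d r : ℕ} (X : Matrix (Fin d) (Fin r) ℂ) (Y : Matrix (Fin r) (Fin d) ℂ)
    {t : ℂ} (ht : t ≠ 0) (h : t ∈ spectrum ℂ (X * Y)) : t ∈ spectrum ℂ (Y * X) := by
  classical
  rw [spectrum.mem_iff, Matrix.isUnit_iff_isUnit_det, isUnit_iff_ne_zero, not_not,
    ← Matrix.exists_mulVec_eq_zero_iff] at h ⊢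
  obtain ⟨v, hv, hv0⟩ := h
  rw [sub_mulVec, algmap_mulVec, sub_eq_zero] at hv0
  have hXY : (X * Y) *ᵥ v = t • v := hv0.symm
  refine ⟨Y *ᵥ v, ?_, ?_⟩
  · intro h0
    apply hv
    have h2 : (X * Y) *ᵥ v = 0 := by rw [← mulVec_mulVec, h0, mulVec_zero]
    rw [hXY] at h2
    rcases smul_eq_zero.mp h2 with h | h
    · exact absurd h ht
    · exact h
  · rw [sub_mulVec, algmap_mulVec, sub_eq_zero]
    rw [mulVec_mulVec, Matrix.mul_assoc, ← mulVec_mulVec, hXY, mulVec_smul]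

lemma dot_tw {d : ℕ} (T A : Matrix (Fin d) (Fin d) ℝ) (x y : Fin d → ℝ) :
    (T *ᵥ x) ⬝ᵥ A *ᵥ (T *ᵥ y) = x ⬝ᵥ (Tᵀ * A * T) *ᵥ y := by
  rw [dotProduct_mulVec, dotProduct_mulVec x, ← vecMul_vecMul, ← vecMul_vecMul,
    vecMul_transpose, dotProduct_mulVec]

lemma key_ineq {d r : ℕ} {H : Matrix (Fin d) (Fin d) ℝ} (hH : H.PosDef)
    (Q : Matrix (Fin d) (Fin r) ℝ) (K : Matrix (Fin r) (Fin r) ℝ) (hK : K.IsSymm)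
    (v : Fin d → ℝ) :
    v ⬝ᵥ (Q * K * Qᵀ) *ᵥ v ≤ specRad (K * Qᵀ * H⁻¹ * Q) * (v ⬝ᵥ H *ᵥ v) := by
  classical
  have hHdet : IsUnit H.det := hH.det_pos.ne'.isUnit
  have hHinv : H⁻¹.PosDef := hH.inv
  set T : Matrix (Fin d) (Fin d) ℝ := CFC.sqrt H⁻¹ with hTdef
  have hTps : T.PosSemidef := Matrix.nonneg_iff_posSemidef.mp (CFC.sqrt_nonneg H⁻¹)
  have hTT : T * T = H⁻¹ := CFC.sqrt_mul_sqrt_self H⁻¹ (Matrix.nonneg_iff_posSemidef.mpr hHinv.posSemidef)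
  have hTsym : Tᵀ = T := by rw [← ct_real]; exact hTps.isHermitian
  have hTdet : IsUnit T.det := by
    rw [isUnit_iff_ne_zero]
    intro h0
    have : H⁻¹.det = 0 := by rw [← hTT, det_mul, h0, mul_zero]
    exact hHinv.det_pos.ne' this
  have hTTinv : T * T⁻¹ = 1 := mul_nonsing_inv T hTdet
  have hTinvT : T⁻¹ * T = 1 := nonsing_inv_mul T hTdet
  set w : Fin d → ℝ := T⁻¹ *ᵥ v with hw
  have hv : v = T *ᵥ w := by rw [hw, mulVec_mulVec, hTTinv, one_mulVec]
  set B : Matrix (Fin d) (Fin d) ℝ := T * (Q * K * Qᵀ) * T with hBdef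
  have hQKQ : (Q * K * Qᵀ)ᵀ = Q * K * Qᵀ := by
    rw [transpose_mul, transpose_mul, transpose_transpose, hK.eq, Matrix.mul_assoc]
  have hB : B.IsHermitian := by
    rw [Matrix.IsHermitian, ct_real, hBdef, transpose_mul, transpose_mul, hQKQ, hTsym, mul_assoc]
  have hL : v ⬝ᵥ (Q * K * Qᵀ) *ᵥ v = w ⬝ᵥ B *ᵥ w := by
    rw [hv, dot_tw, hTsym]
  have hR : v ⬝ᵥ H *ᵥ v = w ⬝ᵥ w := by
    rw [hv, dot_tw, hTsym]
    have hTHT : T * H * T = 1 := by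
      have hH2 : H = T⁻¹ * T⁻¹ := by
        rw [← Matrix.mul_inv_rev, hTT, Matrix.nonsing_inv_nonsing_inv H hHdet]
      rw [hH2, ← mul_assoc, mul_assoc T, ← mul_assoc T, hTTinv, one_mul, hTinvT]
    rw [hTHT, one_mulVec]
  set ρ : ℝ := specRad (K * Qᵀ * H⁻¹ * Q) with hρ
  have hbdd : BddAbove ((fun z : ℂ => ‖z‖) '' spectrum ℂ ((K * Qᵀ * H⁻¹ * Q).map (algebraMap ℝ ℂ))) :=
    (((K * Qᵀ * H⁻¹ * Q).map (algebraMap ℝ ℂ)).finite_spectrum.image _).bddAbove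
  have heig : ∀ i, hB.eigenvalues i ≤ ρ := by
    intro i
    rcases le_or_gt (hB.eigenvalues i) 0 with h0 | h0
    · exact h0.trans (specRad_nonneg _)
    · set t := hB.eigenvalues i with htdef
      have ht : (t : ℂ) ∈ spectrum ℂ (B.map (algebraMap ℝ ℂ)) :=
        mem_spectrum_map (hB.eigenvalues_mem_spectrum_real i)
      have htne : (t : ℂ) ≠ 0 := by
        simpa using h0.ne'
      have e1 : T * (Q * K * Qᵀ) * T = (T * Q) * (K * Qᵀ * T) := by
        simp only [Matrix.mul_assoc]
      have hB2 : B.map (algebraMap ℝ ℂ)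
          = (T * Q).map (algebraMap ℝ ℂ) * (K * Qᵀ * T).map (algebraMap ℝ ℂ) := by
        rw [hBdef, e1, Matrix.map_mul]
      have e2 : (K * Qᵀ * T) * (T * Q) = K * Qᵀ * H⁻¹ * Q := by
        rw [← hTT]; simp only [Matrix.mul_assoc]
      rw [hB2] at ht
      have htY := spec_swap _ _ htne ht
      rw [← Matrix.map_mul, e2] at htY
      have : ‖(t : ℂ)‖ ≤ ρ := le_csSup hbdd ⟨_, htY, rfl⟩
      simpa [Complex.norm_real, abs_of_pos h0] using this
  obtain ⟨c, hc1, hc2⟩ := quad_repr hB w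
  rw [hL, hR, hc1, hc2, Finset.mul_sum]
  refine Finset.sum_le_sum fun i _ => ?_
  exact mul_le_mul_of_nonneg_right (heig i) (sq_nonneg _)

lemma norm_sq_le_dot {d : ℕ} (v : Fin d → ℝ) : ‖v‖^2 ≤ v ⬝ᵥ v := by
  have hnn : (0:ℝ) ≤ v ⬝ᵥ v := by
    simp only [dotProduct]
    exact Finset.sum_nonneg fun i _ => mul_self_nonneg _
  have h1 : ‖v‖ ≤ Real.sqrt (v ⬝ᵥ v) := by
    rw [pi_norm_le_iff_of_nonneg (Real.sqrt_nonneg _)]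
    intro i
    have h2 : ‖v i‖ = Real.sqrt ((v i)^2) := (Real.sqrt_sq_eq_abs _).symm
    rw [h2]
    apply Real.sqrt_le_sqrt
    simp only [dotProduct]
    have := Finset.single_le_sum (f := fun j => v j * v j)
      (fun j _ => mul_self_nonneg (v j)) (Finset.mem_univ i)
    simpa [pow_two] using this
  calc ‖v‖^2 ≤ Real.sqrt (v ⬝ᵥ v) ^ 2 := pow_le_pow_left₀ (norm_nonneg _) h1 2
    _ = v ⬝ᵥ v := Real.sq_sqrt hnn

lemma posdef_coercive {d : ℕ} {H : Matrix (Fin d) (Fin d) ℝ} (hH : H.PosDef) :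
    ∃ c > 0, ∀ v : Fin d → ℝ, c * ‖v‖^2 ≤ v ⬝ᵥ H *ᵥ v := by
  classical
  rcases Nat.eq_zero_or_pos d with hd | hd
  · refine ⟨1, one_pos, fun v => ?_⟩
    subst hd
    have hv : v = 0 := Subsingleton.elim v 0
    rw [hv]
    have h0 : ‖(0 : Fin 0 → ℝ)‖ = 0 := norm_zero
    rw [h0]
    simp [dotProduct]
  · haveI : NeZero d := ⟨hd.ne'⟩
    set c : ℝ := Finset.univ.inf' (Finset.univ_nonempty) hH.1.eigenvalues with hc
    have hcpos : 0 < c := by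
      obtain ⟨i, _, hi⟩ := Finset.exists_mem_eq_inf' (Finset.univ_nonempty) hH.1.eigenvalues
      rw [hc, hi]
      exact hH.eigenvalues_pos i
    refine ⟨c, hcpos, fun v => ?_⟩
    obtain ⟨cv, h1, h2⟩ := quad_repr hH.1 v
    have hle : c * (v ⬝ᵥ v) ≤ v ⬝ᵥ H *ᵥ v := by
      rw [h1, h2, Finset.mul_sum]
      refine Finset.sum_le_sum fun i _ => ?_
      exact mul_le_mul_of_nonneg_right (Finset.inf'_le _ (Finset.mem_univ i)) (sq_nonneg _)
    have := mul_le_mul_of_nonneg_left (norm_sq_le_dot v) hcpos.le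
    linarith

lemma line_hasDerivAt {d : ℕ} (x0 h : Fin d → ℝ) (t : ℝ) :
    HasDerivAt (fun s : ℝ => x0 + s • h) h t := by
  simpa using ((hasDerivAt_id t).smul_const h).const_add x0

lemma line_deriv1 {d : ℕ} {Θ : (Fin d → ℝ) → ℝ} (hΘ : ContDiff ℝ 2 Θ) (x0 h : Fin d → ℝ)
    (t : ℝ) :
    HasDerivAt (fun s : ℝ => Θ (x0 + s • h)) (fderiv ℝ Θ (x0 + t • h) h) t := by
  have hF : HasFDerivAt Θ (fderiv ℝ Θ (x0 + t • h)) (x0 + t • h) :=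
    (hΘ.differentiable (by norm_num)).differentiableAt.hasFDerivAt
  exact hF.comp_hasDerivAt t (line_hasDerivAt x0 h t)

lemma line_deriv2 {d : ℕ} {Θ : (Fin d → ℝ) → ℝ} (hΘ : ContDiff ℝ 2 Θ) (x0 h : Fin d → ℝ)
    (t : ℝ) :
    HasDerivAt (fun s : ℝ => fderiv ℝ Θ (x0 + s • h) h)
      (fderiv ℝ (fderiv ℝ Θ) (x0 + t • h) h h) t := by
  have hΘ' : ContDiff ℝ 1 (fderiv ℝ Θ) := hΘ.fderiv_right (by norm_num)
  have hF : HasFDerivAt (fderiv ℝ Θ) (fderiv ℝ (fderiv ℝ Θ) (x0 + t • h)) (x0 + t • h) :=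
    (hΘ'.differentiable one_ne_zero).differentiableAt.hasFDerivAt
  have hc : HasDerivAt (fun s : ℝ => fderiv ℝ Θ (x0 + s • h))
      (fderiv ℝ (fderiv ℝ Θ) (x0 + t • h) h) t :=
    hF.comp_hasDerivAt t (line_hasDerivAt x0 h t)
  have := hc.clm_apply (hasDerivAt_const t h)
  simpa using this

lemma vec_rep {d : ℕ} (h : Fin d → ℝ) : h = ∑ i, (h i) • (Pi.single i 1 : Fin d → ℝ) := by
  conv_lhs => rw [← Finset.univ_sum_single h]
  refine Finset.sum_congr rfl fun i _ => ?_
  rw [← Pi.single_smul, smul_eq_mul, mul_one]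

lemma clm1_expand {d : ℕ} (L : (Fin d → ℝ) →L[ℝ] ℝ) (h : Fin d → ℝ) :
    L h = ∑ i, h i * L (Pi.single i 1) := by
  conv_lhs => rw [vec_rep h]
  rw [map_sum]
  refine Finset.sum_congr rfl fun i _ => ?_
  rw [_root_.map_smul, smul_eq_mul]

lemma clm2_expand {d : ℕ} (D : (Fin d → ℝ) →L[ℝ] (Fin d → ℝ) →L[ℝ] ℝ) (h : Fin d → ℝ)
    (M : Matrix (Fin d) (Fin d) ℝ)
    (hM : ∀ i j, D (Pi.single i 1) (Pi.single j 1) = M i j) :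
    D h h = h ⬝ᵥ M *ᵥ h := by
  have h1 : D h = ∑ i, h i • D (Pi.single i 1) := by
    conv_lhs => rw [vec_rep h]
    rw [map_sum]
    exact Finset.sum_congr rfl fun i _ => by rw [_root_.map_smul]
  rw [h1, ContinuousLinearMap.sum_apply]
  have h2 : ∀ i, (h i • D (Pi.single i 1)) h = h i * ∑ j, h j * M i j := by
    intro i
    rw [ContinuousLinearMap.smul_apply, smul_eq_mul]
    congr 1
    rw [clm1_expand (D (Pi.single i 1)) h]
    exact Finset.sum_congr rfl fun j _ => by rw [hM]
  rw [Finset.sum_congr rfl fun i _ => h2 i]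
  simp only [dotProduct, mulVec, Finset.mul_sum]
  exact Finset.sum_congr rfl fun i _ => Finset.sum_congr rfl fun j _ => by ring

lemma quad_expand2 {d : ℕ} {H : Matrix (Fin d) (Fin d) ℝ} (hsym : Hᵀ = H) (a h : Fin d → ℝ)
    (t : ℝ) :
    (a + t • h) ⬝ᵥ H *ᵥ (a + t • h)
      = a ⬝ᵥ H *ᵥ a + 2 * t * ((H *ᵥ a) ⬝ᵥ h) + t^2 * (h ⬝ᵥ H *ᵥ h) := by
  have hsw : ∀ u w : Fin d → ℝ, u ⬝ᵥ H *ᵥ w = (H *ᵥ u) ⬝ᵥ w := by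
    intro u w
    rw [dotProduct_mulVec, ← mulVec_transpose, hsym]
  rw [mulVec_add, dotProduct_add, add_dotProduct, add_dotProduct]
  simp only [mulVec_smul, dotProduct_smul, smul_dotProduct, smul_eq_mul]
  have e1 : h ⬝ᵥ H *ᵥ a = (H *ᵥ a) ⬝ᵥ h := by rw [hsw h a, dotProduct_comm, hsw a h]
  have e2 : a ⬝ᵥ H *ᵥ h = (H *ᵥ a) ⬝ᵥ h := hsw a h
  rw [e1, e2]
  ring

end Helpers

theorem stmt2 {d r : ℕ} (H : Matrix (Fin d) (Fin d) ℝ) (hH : H.PosDef)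
    (x : Fin d → ℝ)
    (f : (Fin d → ℝ) → ℝ)
    (hf : ∀ z, f z = (1 / 2) * ((z - x) ⬝ᵥ H.mulVec (z - x)))
    (Θ : (Fin d → ℝ) → ℝ) (hΘ : ContDiff ℝ 2 Θ) (Θmax : ℝ)
    (xstar : Fin d → ℝ) (μstar : ℝ) (hμ : 0 ≤ μstar)
    -- (i) stationarity: H (x⋆ − x) = μ⋆ ∇Θ(x⋆)
    (hstat : ∀ i, H.mulVec (xstar - x) i = μstar * fderiv ℝ Θ xstar (Pi.single i 1))
    -- (ii) feasibility
    (hfeas : Θ xstar = Θmax)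
    -- (iii) low-rank factorization of the Hessian of Θ at x⋆
    (Q : Matrix (Fin d) (Fin r) ℝ) (K : Matrix (Fin r) (Fin r) ℝ) (hK : K.IsSymm)
    (hhess : ∀ i j, iteratedFDeriv ℝ 2 Θ xstar ![Pi.single i 1, Pi.single j 1]
        = (Q * K * Qᵀ) i j)
    -- (iv) spectral inequality
    (hspec : μstar * specRad (K * Qᵀ * H⁻¹ * Q) < 1) :
    ∃ U ∈ nhds xstar, ∀ z ∈ U, Θ z = Θmax → z ≠ xstar → f xstar < f z := by
  classical
  set a : Fin d → ℝ := xstar - x with ha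
  have hHsym : Hᵀ = H := by rw [← ct_real]; exact hH.1
  -- stationarity in linear-functional form
  have hstat' : ∀ hv : Fin d → ℝ, (H *ᵥ a) ⬝ᵥ hv = μstar * fderiv ℝ Θ xstar hv := by
    intro hv
    rw [clm1_expand (fderiv ℝ Θ xstar) hv, Finset.mul_sum]
    simp only [dotProduct]
    refine Finset.sum_congr rfl fun i _ => ?_
    rw [hstat i]
    ring
  -- quadratic expansion of f along lines
  have hfexp : ∀ (h : Fin d → ℝ) (t : ℝ), f (xstar + t • h)
      = f xstar + t * ((H *ᵥ a) ⬝ᵥ h) + t^2 * ((1/2) * (h ⬝ᵥ H *ᵥ h)) := by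
    intro h t
    rw [hf, hf]
    have e0 : xstar + t • h - x = a + t • h := by
      rw [ha]; abel
    rw [e0, quad_expand2 hHsym a h t]
    ring
  -- second derivative data
  have hD2cont : Continuous (fderiv ℝ (fderiv ℝ Θ)) :=
    (hΘ.fderiv_right (m := 1) (by norm_num)).continuous_fderiv one_ne_zero
  have hD2star : ∀ h : Fin d → ℝ, fderiv ℝ (fderiv ℝ Θ) xstar h h = h ⬝ᵥ (Q * K * Qᵀ) *ᵥ h := by
    intro h
    refine clm2_expand _ h _ fun i j => ?_
    have := hhess i j
    rw [iteratedFDeriv_two_apply] at this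
    simpa using this
  -- constants
  obtain ⟨cH, hcH, hcoer⟩ := posdef_coercive hH
  set ρ : ℝ := specRad (K * Qᵀ * H⁻¹ * Q) with hρ
  have hρ0 : 0 ≤ ρ := specRad_nonneg _
  set ε : ℝ := (1 - μstar * ρ) * cH with hε
  have hεpos : 0 < ε := mul_pos (by linarith) hcH
  have hgap : ∀ h : Fin d → ℝ,
      ε * ‖h‖^2 ≤ h ⬝ᵥ H *ᵥ h - μstar * (h ⬝ᵥ (Q * K * Qᵀ) *ᵥ h) := by
    intro h
    have h1 : μstar * (h ⬝ᵥ (Q * K * Qᵀ) *ᵥ h) ≤ μstar * ρ * (h ⬝ᵥ H *ᵥ h) := by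
      have := mul_le_mul_of_nonneg_left (key_ineq hH Q K hK h) hμ
      calc μstar * (h ⬝ᵥ (Q * K * Qᵀ) *ᵥ h) ≤ μstar * (ρ * (h ⬝ᵥ H *ᵥ h)) := this
        _ = μstar * ρ * (h ⬝ᵥ H *ᵥ h) := by ring
    have h2 : cH * ‖h‖^2 ≤ h ⬝ᵥ H *ᵥ h := hcoer h
    have h3 : 0 ≤ h ⬝ᵥ H *ᵥ h := le_trans (by positivity) h2
    nlinarith [hspec, mul_nonneg hμ hρ0]
  -- choose the neighborhood via continuity of the second derivative
  have hcontAt : ContinuousAt (fderiv ℝ (fderiv ℝ Θ)) xstar := hD2cont.continuousAt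
  obtain ⟨δ, hδpos, hδ⟩ := (Metric.continuousAt_iff (f := fderiv ℝ (fderiv ℝ Θ)) (a := xstar)).mp hcontAt (ε / (μstar + 1))
    (by positivity)
  refine ⟨Metric.ball xstar δ, Metric.ball_mem_nhds _ hδpos, fun z hzball hzfeas hzne => ?_⟩
  set h : Fin d → ℝ := z - xstar with hhdef
  have hh0 : h ≠ 0 := sub_ne_zero.mpr hzne
  have hhnorm : ‖h‖ < δ := by
    rw [Metric.mem_ball, dist_eq_norm] at hzball
    exact hzball
  have hz1 : xstar + (1:ℝ) • h = z := by rw [one_smul, hhdef]; abel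
  -- the function ψ and its derivatives
  set c1 : ℝ := (H *ᵥ a) ⬝ᵥ h with hc1
  set c2 : ℝ := h ⬝ᵥ H *ᵥ h with hc2
  set ψ : ℝ → ℝ := fun t => f xstar + t * c1 + t^2 * ((1/2) * c2)
    - μstar * Θ (xstar + t • h) with hψ
  set ψ' : ℝ → ℝ := fun t => c1 + t * c2 - μstar * fderiv ℝ Θ (xstar + t • h) h with hψ'
  have hψd : ∀ t, HasDerivAt ψ (ψ' t) t := by
    intro t
    have p1 : HasDerivAt (fun t : ℝ => f xstar + t * c1 + t^2 * ((1/2) * c2))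
        (c1 + (2 * t) * ((1/2) * c2)) t := by
      have q1 : HasDerivAt (fun t : ℝ => t * c1) c1 t := by
        simpa using (hasDerivAt_id t).mul_const c1
      have q2 : HasDerivAt (fun t : ℝ => t^2 * ((1/2) * c2)) ((2 * t) * ((1/2) * c2)) t := by
        have := (hasDerivAt_pow 2 t).mul_const ((1/2) * c2)
        simpa using this
      exact ((q1.const_add (f xstar)).add q2)
    have p2 := (line_deriv1 hΘ xstar h t).const_mul μstar
    have := p1.sub p2
    exact this.congr_deriv (by simp only [hψ']; ring)
  have hψ'd : ∀ t, HasDerivAt ψ'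
      (c2 - μstar * fderiv ℝ (fderiv ℝ Θ) (xstar + t • h) h h) t := by
    intro t
    have q1 : HasDerivAt (fun t : ℝ => c1 + t * c2) c2 t := by
      simpa using ((hasDerivAt_id t).mul_const c2).const_add c1
    have q2 := (line_deriv2 hΘ xstar h t).const_mul μstar
    exact q1.sub q2
  -- mean value theorem, twice
  obtain ⟨ξ, hξ, hslope⟩ := exists_hasDerivAt_eq_slope ψ ψ' one_pos
    (fun t _ => (hψd t).continuousAt.continuousWithinAt) (fun t _ => hψd t)
  obtain ⟨η, hη, hslope2⟩ := exists_hasDerivAt_eq_slope ψ'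
    (fun t => c2 - μstar * fderiv ℝ (fderiv ℝ Θ) (xstar + t • h) h h) hξ.1
    (fun t _ => (hψ'd t).continuousAt.continuousWithinAt) (fun t _ => hψ'd t)
  -- ψ' 0 = 0
  have hψ'0 : ψ' 0 = 0 := by
    have e : c1 = μstar * fderiv ℝ Θ xstar h := hstat' h
    show c1 + 0 * c2 - μstar * fderiv ℝ Θ (xstar + (0:ℝ) • h) h = 0
    rw [zero_smul, add_zero, e]
    ring
  -- second derivative at the intermediate point is positive
  have hψ''pos : 0 < c2 - μstar * fderiv ℝ (fderiv ℝ Θ) (xstar + η • h) h h := by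
    set y : Fin d → ℝ := xstar + η • h with hy
    have hymem : dist y xstar < δ := by
      rw [hy, dist_eq_norm]
      have : xstar + η • h - xstar = η • h := by abel
      rw [this, norm_smul]
      have hη1 : |η| ≤ 1 := by
        rw [abs_of_pos hη.1]
        exact le_of_lt (lt_trans hη.2 hξ.2)
      calc ‖η‖ * ‖h‖ ≤ 1 * ‖h‖ := by
            apply mul_le_mul_of_nonneg_right _ (norm_nonneg h)
            simpa using hη1
        _ = ‖h‖ := one_mul _
        _ < δ := hhnorm
    have hd2 : ‖fderiv ℝ (fderiv ℝ Θ) y - fderiv ℝ (fderiv ℝ Θ) xstar‖ < ε / (μstar + 1) := by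
      have := hδ hymem
      exact lt_of_eq_of_lt (dist_eq_norm (E := (Fin d → ℝ) →L[ℝ] (Fin d → ℝ) →L[ℝ] ℝ) _ _).symm this
    have hdiff : |fderiv ℝ (fderiv ℝ Θ) y h h - fderiv ℝ (fderiv ℝ Θ) xstar h h|
        ≤ ‖fderiv ℝ (fderiv ℝ Θ) y - fderiv ℝ (fderiv ℝ Θ) xstar‖ * ‖h‖ * ‖h‖ := by
      have e1 : fderiv ℝ (fderiv ℝ Θ) y h h - fderiv ℝ (fderiv ℝ Θ) xstar h h
          = ((fderiv ℝ (fderiv ℝ Θ) y - fderiv ℝ (fderiv ℝ Θ) xstar) h) h := by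
        simp [ContinuousLinearMap.sub_apply]
      rw [e1, ← Real.norm_eq_abs]
      calc ‖((fderiv ℝ (fderiv ℝ Θ) y - fderiv ℝ (fderiv ℝ Θ) xstar) h) h‖
          ≤ ‖(fderiv ℝ (fderiv ℝ Θ) y - fderiv ℝ (fderiv ℝ Θ) xstar) h‖ * ‖h‖ :=
            ContinuousLinearMap.le_opNorm _ _
        _ ≤ ‖fderiv ℝ (fderiv ℝ Θ) y - fderiv ℝ (fderiv ℝ Θ) xstar‖ * ‖h‖ * ‖h‖ := by
            apply mul_le_mul_of_nonneg_right _ (norm_nonneg h)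
            exact ContinuousLinearMap.le_opNorm _ _
    have hnormpos : 0 < ‖h‖ := norm_pos_iff.mpr hh0
    have hbound : μstar * (fderiv ℝ (fderiv ℝ Θ) y h h)
        < μstar * (h ⬝ᵥ (Q * K * Qᵀ) *ᵥ h) + ε * ‖h‖^2 := by
      have habs : fderiv ℝ (fderiv ℝ Θ) y h h
          ≤ h ⬝ᵥ (Q * K * Qᵀ) *ᵥ h + (ε / (μstar + 1)) * ‖h‖^2 := by
        have := abs_le.mp hdiff |>.2
        rw [hD2star h] at this
        nlinarith [hd2, sq_nonneg ‖h‖, mul_pos hnormpos hnormpos]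
      have hfrac : μstar * (ε / (μstar + 1)) < ε := by
        rw [div_eq_inv_mul]
        have h1 : μstar / (μstar + 1) < 1 := by
          rw [div_lt_one (by linarith)]
          linarith
        calc μstar * ((μstar + 1)⁻¹ * ε) = (μstar / (μstar + 1)) * ε := by
              rw [div_eq_mul_inv]; ring
          _ < 1 * ε := by
              apply mul_lt_mul_of_pos_right h1 hεpos
          _ = ε := one_mul _
      have h2 : μstar * (fderiv ℝ (fderiv ℝ Θ) y h h)
          ≤ μstar * (h ⬝ᵥ (Q * K * Qᵀ) *ᵥ h) + μstar * (ε / (μstar + 1)) * ‖h‖^2 := by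
        nlinarith [mul_le_mul_of_nonneg_left habs hμ]
      have h3 : μstar * (ε / (μstar + 1)) * ‖h‖^2 < ε * ‖h‖^2 := by
        apply mul_lt_mul_of_pos_right hfrac
        positivity
      linarith
    have := hgap h
    rw [hc2]
    nlinarith [mul_pos hεpos (mul_pos hnormpos hnormpos)]
  -- put everything together
  have hξpos : (0:ℝ) < ξ := hξ.1
  have hslope' : ψ 1 - ψ 0 = ψ' ξ := by
    rw [hslope]
    simp
  have hslope2' : ψ' ξ = ξ * (c2 - μstar * fderiv ℝ (fderiv ℝ Θ) (xstar + η • h) h h) := by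
    rw [hslope2, hψ'0, sub_zero, sub_zero]
    field_simp [hξpos.ne']
  have hψpos : 0 < ψ 1 - ψ 0 := by
    rw [hslope', hslope2']
    exact mul_pos hξpos hψ''pos
  have hψ1 : ψ 1 = f z - μstar * Θ z := by
    have e := hfexp h 1
    rw [hz1] at e
    show f xstar + 1 * c1 + 1^2 * (1/2 * c2) - μstar * Θ (xstar + (1:ℝ) • h) = f z - μstar * Θ z
    rw [hz1, e, hc1, hc2]
  have hψ0 : ψ 0 = f xstar - μstar * Θ xstar := by
    rw [hψ]
    simp
  rw [hψ1, hψ0, hzfeas, ← hfeas] at hψpos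
  linarith
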